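/- Let r ≥ 2 be an integer and ξ ∈ {1,…,r} with ξ² ≤ ξ + (r+1)·⌊ξ²/(r+1)⌋. Set s = r² + r + ξ and t = r³ + r² + 2ξr + ⌊ξ²/(r+1)⌋. Then: ⌊t/s⌋ = r and ⌈t/s⌉ = r+1; ⌈(t/s)·⌈t/s⌉⌉ = s; 0 ≤ s² − t(r+1) ≤ ξ; (s² − t(r+1))·(r+1) < s; and r·(s² + s − t(r+1)) ≤ t. -/
import Mathlib
set_option maxHeartbeats 1000000

theorem parameters_satisfy_conditions (r ξ : ℕ) (hr : 2 ≤ r) (hξ1 : 1 ≤ ξ) (hξ2 : ξ ≤ r)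
    (hineq : ξ^2 ≤ ξ + (r + 1) * (ξ^2 / (r + 1)))
    (s t : ℕ) (hs : s = r^2 + r + ξ)
    (ht : t = r^3 + r^2 + 2*ξ*r + ξ^2 / (r + 1)) :
    ⌊(t : ℚ) / (s : ℚ)⌋ = (r : ℤ) ∧
    ⌈(t : ℚ) / (s : ℚ)⌉ = (r : ℤ) + 1 ∧
    ⌈(t : ℚ) / (s : ℚ) * ((⌈(t : ℚ) / (s : ℚ)⌉ : ℤ) : ℚ)⌉ = (s : ℤ) ∧
    (0 ≤ (s : ℤ)^2 - t * (r + 1) ∧ (s : ℤ)^2 - t * (r + 1) ≤ (ξ : ℤ)) ∧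
    ((s : ℤ)^2 - t * (r + 1)) * (r + 1) < (s : ℤ) ∧
    (r : ℤ) * ((s : ℤ)^2 + s - t * (r + 1)) ≤ (t : ℤ) := by
  set q := ξ^2 / (r+1) with hq
  set u := ξ^2 % (r+1) with hu
  have hqu : (r+1) * q + u = ξ^2 := Nat.div_add_mod _ _
  have hult : u < r + 1 := Nat.mod_lt _ (by omega)
  have huξ : u ≤ ξ := by omega
  -- cast facts to ℤ
  have HQ : ((r:ℤ)+1) * q + u = (ξ:ℤ)^2 := by exact_mod_cast hqu
  have hr' : (2:ℤ) ≤ r := by exact_mod_cast hr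
  have hξ1' : (1:ℤ) ≤ ξ := by exact_mod_cast hξ1
  have hξ2' : (ξ:ℤ) ≤ r := by exact_mod_cast hξ2
  have huξ' : (u:ℤ) ≤ ξ := by exact_mod_cast huξ
  have hu0 : (0:ℤ) ≤ u := by positivity
  have hq0 : (0:ℤ) ≤ q := by positivity
  have hS : (s:ℤ) = (r:ℤ)^2 + r + ξ := by rw [hs]; push_cast; ring
  have hT : (t:ℤ) = (r:ℤ)^3 + r^2 + 2*ξ*r + q := by rw [ht]; push_cast; ring
  have hkey : (s:ℤ)^2 - t * (r+1) = u := by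
    rw [hS, hT]; nlinarith [HQ]
  have hs0 : (0:ℚ) < s := by
    have : 0 < s := by rw [hs]; positivity
    exact_mod_cast this
  have h1 : (r:ℤ) * s < t := by rw [hS, hT]; nlinarith
  have h2 : (t:ℤ) < (r+1) * s := by rw [hS, hT]; nlinarith
  have hus : (u:ℤ) < s := by rw [hS]; nlinarith
  have h5 : (s:ℤ) * (s - 1) < t * (r+1) := by
    have e : (s:ℤ) * (s - 1) - t * (r+1) = u - s := by linear_combination hkey
    linarith
  have h6 : (t:ℤ) * (r+1) ≤ (s:ℤ)^2 := by linarith [hkey]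
  -- ℚ versions
  have q1 : (r:ℚ) * s < t := by exact_mod_cast h1
  have q2 : (t:ℚ) < ((r:ℚ)+1) * s := by exact_mod_cast h2
  have q5 : (s:ℚ) * ((s:ℚ) - 1) < t * ((r:ℚ)+1) := by exact_mod_cast h5
  have q6 : (t:ℚ) * ((r:ℚ)+1) ≤ (s:ℚ)^2 := by exact_mod_cast h6
  have hfloor : ⌊(t : ℚ) / (s : ℚ)⌋ = (r : ℤ) := by
    rw [Int.floor_eq_iff]
    constructor
    · rw [le_div_iff₀ hs0]; push_cast; linarith
    · rw [div_lt_iff₀ hs0]; push_cast; linarith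
  have hceil : ⌈(t : ℚ) / (s : ℚ)⌉ = (r : ℤ) + 1 := by
    rw [Int.ceil_eq_iff]
    constructor
    · rw [lt_div_iff₀ hs0]; push_cast; linarith
    · rw [div_le_iff₀ hs0]; push_cast; linarith
  refine ⟨hfloor, hceil, ?_, ⟨by omega, by omega⟩, ?_, ?_⟩
  · rw [hceil]
    rw [Int.ceil_eq_iff]
    constructor
    · rw [div_mul_eq_mul_div, lt_div_iff₀ hs0]; push_cast; linarith
    · rw [div_mul_eq_mul_div, div_le_iff₀ hs0]; push_cast; nlinarith [q6]
  · rw [hkey, hS]; nlinarith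
  · have heq : (r:ℤ) * ((s:ℤ)^2 + s - t * (r+1)) = r * (u + s) := by
      rw [← hkey]; ring
    rw [heq, hS, hT]; nlinarith
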